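/- The canonical map ι : X → 𝔓ᵤ(X), ι(x) = {x}, is a topological embedding with respect to the D-topologies. In particular, for every D-open O ⊆ X, the set O' = {A ∈ 𝔓(X) : A ∩ O ≠ ∅} is D-open in the union power space and ι(O) = ι(X) ∩ O'. -/

import Mathlib

open Set Function

universe u

/-- A diffeology on a set `X`, encoded via total functions on `Fin n → ℝ`
together with a designated open domain `U`. -/
structure DiffeologyPlots (X : Type u) where
  IsPlot : (n : ℕ) → Set (Fin n → ℝ) → ((Fin n → ℝ) → X) → Prop
  isOpen_of_isPlot : ∀ {n : ℕ} {U : Set (Fin n → ℝ)} {P : (Fin n → ℝ) → X},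
    IsPlot n U P → IsOpen U
  const_isPlot : ∀ (n : ℕ) (U : Set (Fin n → ℝ)), IsOpen U → ∀ x : X,
    IsPlot n U (fun _ => x)
  locality : ∀ {n : ℕ} {U : Set (Fin n → ℝ)} {P : (Fin n → ℝ) → X}, IsOpen U →
    (∀ r ∈ U, ∃ V, IsOpen V ∧ r ∈ V ∧ V ⊆ U ∧ IsPlot n V P) → IsPlot n U P
  smooth_comp : ∀ {n m : ℕ} {U : Set (Fin n → ℝ)} {P : (Fin n → ℝ) → X}
    {V : Set (Fin m → ℝ)} {F : (Fin m → ℝ) → (Fin n → ℝ)},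
    IsPlot n U P → IsOpen V → ContDiffOn ℝ (⊤ : ℕ∞) F V → Set.MapsTo F V U →
    IsPlot m V (P ∘ F)
  plot_congr : ∀ {n : ℕ} {U : Set (Fin n → ℝ)} {P Q : (Fin n → ℝ) → X},
    IsPlot n U P → Set.EqOn P Q U → IsPlot n U Q

/-- The UPD property: `P : U → 𝔓(X)` admits local implicit plots through every point of
every value, where plots of `X` are given by the predicate `Pl`. This characterizes the
plots of the union power set diffeology. -/
def UPDProp {X : Type u} (Pl : (n : ℕ) → Set (Fin n → ℝ) → ((Fin n → ℝ) → X) → Prop)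
    (n : ℕ) (U : Set (Fin n → ℝ)) (P : (Fin n → ℝ) → Set X) : Prop :=
  IsOpen U ∧ ∀ r₀ ∈ U, ∀ x₀ ∈ P r₀,
    ∃ (V : Set (Fin n → ℝ)) (σ : (Fin n → ℝ) → X),
      IsOpen V ∧ r₀ ∈ V ∧ V ⊆ U ∧ Pl n V σ ∧ σ r₀ = x₀ ∧ ∀ r ∈ V, σ r ∈ P r

/-- The D-topology: a set is D-open iff its preimage by every plot is open. -/
def DOpen {X : Type u} (D : DiffeologyPlots X) (O : Set X) : Prop :=
  ∀ (n : ℕ) (U : Set (Fin n → ℝ)) (P : (Fin n → ℝ) → X),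
    D.IsPlot n U P → IsOpen {r ∈ U | P r ∈ O}

/-- D-open sets of the union power space `𝔓ᵤ(X)`. -/
def DOpenU {X : Type u} (D : DiffeologyPlots X) (O' : Set (Set X)) : Prop :=
  ∀ (n : ℕ) (U : Set (Fin n → ℝ)) (P : (Fin n → ℝ) → Set X),
    UPDProp D.IsPlot n U P → IsOpen {r ∈ U | P r ∈ O'}

/-- `ι : X → 𝔓ᵤ(X)`, `ι x = {x}`, is a topological embedding for the
D-topologies: it is injective, D-continuous, and for every D-open `O ⊆ X` the set
`O' = {A : A ∩ O ≠ ∅}` is D-open in `𝔓ᵤ(X)` with `ι(O) = ι(X) ∩ O'`. -/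
theorem singleton_map_D_embedding {X : Type u} (D : DiffeologyPlots X) :
    Function.Injective (fun x : X => ({x} : Set X)) ∧
    (∀ O' : Set (Set X), DOpenU D O' → DOpen D {x : X | ({x} : Set X) ∈ O'}) ∧
    (∀ O : Set X, DOpen D O →
      DOpenU D {A : Set X | (A ∩ O).Nonempty} ∧
      (fun x : X => ({x} : Set X)) '' O =
        Set.range (fun x : X => ({x} : Set X)) ∩ {A : Set X | (A ∩ O).Nonempty}) := by

  refine ⟨?_, ?_, ?_⟩
  · intro x y h
    simpa using h
  · intro O' hO' n U P hP
    have hU := D.isOpen_of_isPlot hP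
    have : UPDProp D.IsPlot n U (fun r => ({P r} : Set X)) := by
      refine ⟨hU, fun r₀ hr₀ x₀ hx₀ => ⟨U, P, hU, hr₀, subset_rfl, hP, ?_, fun r _ => rfl⟩⟩
      simpa using hx₀.symm
    exact hO' n U _ this
  · intro O hO
    constructor
    · intro n U P hP
      obtain ⟨hU, hloc⟩ := hP
      rw [isOpen_iff_mem_nhds]
      rintro r₀ ⟨hr₀U, x₀, hx₀P, hx₀O⟩
      obtain ⟨V, σ, hV, hr₀V, hVU, hσ, hσr₀, hσP⟩ := hloc r₀ hr₀U x₀ hx₀P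
      have hopen : IsOpen {r ∈ V | σ r ∈ O} := hO n V σ hσ
      refine Filter.mem_of_superset (hopen.mem_nhds ⟨hr₀V, hσr₀ ▸ hx₀O⟩) ?_
      rintro r ⟨hrV, hrO⟩
      exact ⟨hVU hrV, σ r, hσP r hrV, hrO⟩
    · ext A
      constructor
      · rintro ⟨x, hx, rfl⟩
        exact ⟨⟨x, rfl⟩, x, rfl, hx⟩
      · rintro ⟨⟨x, rfl⟩, y, hy, hyO⟩
        simp only [mem_singleton_iff] at hy
        exact ⟨x, hy ▸ hyO, rfl⟩
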